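/- Shallow net representation by eDCNN: let 2 ≤ s ≤ d, n ∈ ℕ, L* = ⌈nd/(s-1)⌉, W ∈ ℝ^{n×d}, θ ∈ ℝ^n. Then there exist scalars b¹,…,b^{L*-1} ∈ ℝ, a vector b^{L*} ∈ ℝ^{d+L*s}, and filters w¹,…,w^{L*} supported on {0,…,s} such that for all x ∈ [0,1]^d, σ(Wx+θ) = S_{d+L*s, d, 0} ∘ σ ∘ C_{L*} ∘ σ ∘ C^R_{L*-1} ∘ ⋯ ∘ σ ∘ C^R_1 (x), where C^R_k(v) = w^k * v + b^k 𝟙 and C_{L*}(v) = w^{L*} * v + b^{L*}. -/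

import Mathlib

open Polynomial Finset


/-- A sequence `w : ℤ → ℝ` is supported on `{0,…,s}`. -/
def SuppOn (s : ℕ) (w : ℤ → ℝ) : Prop :=
  ∀ j : ℤ, (j < 0 ∨ (s : ℤ) < j) → w j = 0

/-- Zero-padded (full) convolution of sequences. -/
noncomputable def convSeq (w v : ℤ → ℝ) : ℤ → ℝ :=
  fun j => ∑ᶠ k : ℤ, w (j - k) * v k

/-- The indicator of coordinates `{1,…,m}`. -/
def onesV (m : ℕ) : ℤ → ℝ := fun j => if 1 ≤ j ∧ j ≤ (m : ℤ) then 1 else 0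

/-- Restricted eDCNN layers with ReLU: `σ(w^k * (previous) + b^k 𝟙_{d+ks})`. -/
noncomputable def eDCNNRelu (s d : ℕ) (w : ℕ → ℤ → ℝ) (b : ℕ → ℝ) (x : ℤ → ℝ) :
    ℕ → ℤ → ℝ
  | 0 => x
  | k + 1 => fun j =>
      max (convSeq (w k) (eDCNNRelu s d w b x k) j + onesV (d + (k + 1) * s) j * b k) 0

/-- Embedding of `ℝ^d` into `ℝ^ℤ` at coordinates `1,…,d`. -/
def embed (d : ℕ) (x : Fin d → ℝ) : ℤ → ℝ :=
  fun j => if h : 1 ≤ j ∧ j ≤ (d : ℤ) then x ⟨(j - 1).toNat, by omega⟩ else 0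


-- ### Auxiliary definitions and lemmas ###

def SuppIn (N : ℤ) (v : ℤ → ℝ) : Prop := ∀ j : ℤ, (j < 1 ∨ N < j) → v j = 0

noncomputable def polySeq (p : ℝ[X]) : ℤ → ℝ :=
  fun j => if 0 ≤ j then p.coeff j.toNat else 0

lemma polySeq_suppOn {p : ℝ[X]} {s : ℕ} (h : p.natDegree ≤ s) : SuppOn s (polySeq p) := by
  intro j hj
  unfold polySeq
  rcases hj with hj | hj
  · simp [not_le.2 hj]
  · rcases le_or_gt 0 j with h0 | h0
    · simp only [if_pos h0]
      exact Polynomial.coeff_eq_zero_of_natDegree_lt (by omega)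
    · simp [not_le.2 h0]

lemma conv_eq_sum {w v : ℤ → ℝ} {N : ℤ} (hv : SuppIn N v) (j : ℤ) :
    convSeq w v j = ∑ k ∈ Finset.Icc (1 : ℤ) N, w (j - k) * v k := by
  apply finsum_eq_finset_sum_of_support_subset
  intro k hk
  simp only [Function.mem_support] at hk
  simp only [Finset.coe_Icc, Set.mem_Icc]
  by_contra hc
  push_neg at hc
  rcases le_or_gt 1 k with h1 | h1
  · exact hk (by rw [hv k (Or.inr (hc h1))]; ring)
  · exact hk (by rw [hv k (Or.inl h1)]; ring)

lemma conv_supp {w v : ℤ → ℝ} {s : ℕ} {N : ℤ} (hw : SuppOn s w) (hv : SuppIn N v) :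
    SuppIn (N + s) (convSeq w v) := by
  intro j hj
  rw [conv_eq_sum hv]
  apply Finset.sum_eq_zero
  intro k hk
  simp only [Finset.mem_Icc] at hk
  rcases hj with hj | hj
  · rw [hw (j - k) (Or.inl (by omega))]; ring
  · rw [hw (j - k) (Or.inr (by omega))]; ring

lemma suppIn_mono {v : ℤ → ℝ} {N N' : ℤ} (h : N ≤ N') (hv : SuppIn N v) : SuppIn N' v := by
  intro j hj
  exact hv j (by omega)

lemma conv_add {w v1 v2 : ℤ → ℝ} {N : ℤ} (h1 : SuppIn N v1) (h2 : SuppIn N v2) (j : ℤ) :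
    convSeq w (fun i => v1 i + v2 i) j = convSeq w v1 j + convSeq w v2 j := by
  have h12 : SuppIn N (fun i => v1 i + v2 i) := by
    intro i hi; simp [h1 i hi, h2 i hi]
  rw [conv_eq_sum h12, conv_eq_sum h1, conv_eq_sum h2, ← Finset.sum_add_distrib]
  exact Finset.sum_congr rfl fun k _ => by ring

lemma polySeq_mul_core (p p' : ℝ[X]) (m : ℤ) (F : Finset ℤ)
    (hF : ∀ k, polySeq p (m - k) * polySeq p' k ≠ 0 → k ∈ F) :
    ∑ k ∈ F, polySeq p (m - k) * polySeq p' k = polySeq (p * p') m := by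
  rcases lt_or_ge m 0 with hm | hm
  · rw [Finset.sum_eq_zero, polySeq, if_neg (by omega)]
    intro k hk
    by_contra hc
    rcases le_or_gt 0 k with h0 | h0
    · exact hc (by rw [show polySeq p (m - k) = 0 from if_neg (by omega)]; ring)
    · exact hc (by rw [show polySeq p' k = 0 from if_neg (by omega)]; ring)
  · -- m ≥ 0
    have hsub : ∀ k, polySeq p (m - k) * polySeq p' k ≠ 0 → k ∈ Finset.Icc (0:ℤ) m := by
      intro k hk
      simp only [Finset.mem_Icc]
      constructor
      · by_contra h; push_neg at h
        exact hk (by rw [show polySeq p' k = 0 from if_neg (by omega)]; ring)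
      · by_contra h; push_neg at h
        exact hk (by rw [show polySeq p (m - k) = 0 from if_neg (by omega)]; ring)
    have key : ∀ (G : Finset ℤ), (∀ k, polySeq p (m - k) * polySeq p' k ≠ 0 → k ∈ G) →
        ∑ k ∈ G, polySeq p (m - k) * polySeq p' k
          = ∑ k ∈ G ∪ Finset.Icc (0:ℤ) m, polySeq p (m - k) * polySeq p' k := by
      intro G hG
      apply Finset.sum_subset Finset.subset_union_left
      intro k _ hk
      by_contra hc
      exact hk (hG k hc)
    have key2 : ∑ k ∈ Finset.Icc (0:ℤ) m, polySeq p (m - k) * polySeq p' k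
          = ∑ k ∈ Finset.Icc (0:ℤ) m ∪ F, polySeq p (m - k) * polySeq p' k := by
      apply Finset.sum_subset Finset.subset_union_left
      intro k _ hk
      by_contra hc
      exact hk (hsub k hc)
    rw [key F hF, Finset.union_comm, ← key2]
    -- now compute the canonical sum
    have hbij : ∑ k ∈ Finset.Icc (0:ℤ) m, polySeq p (m - k) * polySeq p' k
        = ∑ k ∈ Finset.range (m.toNat + 1), p.coeff (m.toNat - k) * p'.coeff k := by
      apply Finset.sum_nbij' (fun (k : ℤ) => k.toNat) (fun (k : ℕ) => (k : ℤ))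
      · intro a ha; simp only [Finset.mem_Icc] at ha; simp only [Finset.mem_range]; omega
      · intro a ha; simp only [Finset.mem_range] at ha; simp only [Finset.mem_Icc]; omega
      · intro a ha; simp only [Finset.mem_Icc] at ha; omega
      · intro a ha; simp
      · intro a ha
        simp only [Finset.mem_Icc] at ha
        rw [polySeq, polySeq, if_pos (by omega), if_pos (by omega)]
        congr 2 <;> omega
    rw [hbij, polySeq, if_pos hm, mul_comm p p', Polynomial.coeff_mul,
      Finset.Nat.sum_antidiagonal_eq_sum_range_succ (fun a b => p'.coeff a * p.coeff b)]
    exact Finset.sum_congr rfl fun k hk => by ring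

lemma conv_one {v : ℤ → ℝ} (j : ℤ) : convSeq (polySeq 1) v j = v j := by
  have : ∀ k : ℤ, k ≠ j → polySeq (1 : ℝ[X]) (j - k) * v k = 0 := by
    intro k hk
    rcases lt_or_ge (j - k) 0 with h | h
    · rw [show polySeq (1:ℝ[X]) (j - k) = 0 from if_neg (by omega)]; ring
    · rw [polySeq, if_pos (by omega), Polynomial.coeff_one, if_neg (by omega)]; ring
  rw [convSeq, finsum_eq_single _ j this]
  simp [polySeq]

lemma conv_conv {v : ℤ → ℝ} {N : ℤ} (hv : SuppIn N v) (p p' : ℝ[X]) (j : ℤ) :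
    convSeq (polySeq p) (convSeq (polySeq p') v) j = convSeq (polySeq (p * p')) v j := by
  have hin : SuppIn (N + p'.natDegree) (convSeq (polySeq p') v) :=
    conv_supp (polySeq_suppOn le_rfl) hv
  rw [conv_eq_sum hin, conv_eq_sum hv]
  have : ∀ k ∈ Finset.Icc (1:ℤ) (N + p'.natDegree),
      polySeq p (j - k) * convSeq (polySeq p') v k
        = ∑ l ∈ Finset.Icc (1:ℤ) N, polySeq p (j - k) * (polySeq p' (k - l) * v l) := by
    intro k _
    rw [conv_eq_sum hv, Finset.mul_sum]
  rw [Finset.sum_congr rfl this, Finset.sum_comm]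
  apply Finset.sum_congr rfl
  intro l hl
  simp only [Finset.mem_Icc] at hl
  have : ∀ k ∈ Finset.Icc (1:ℤ) (N + p'.natDegree),
      polySeq p (j - k) * (polySeq p' (k - l) * v l)
        = (polySeq p ((j - l) - (k - l)) * polySeq p' (k - l)) * v l := by
    intro k _; rw [show j - l - (k - l) = j - k by ring]; ring
  rw [Finset.sum_congr rfl this, ← Finset.sum_mul]
  congr 1
  have hmap : ∑ k ∈ Finset.Icc (1:ℤ) (N + p'.natDegree),
      polySeq p ((j - l) - (k - l)) * polySeq p' (k - l)
      = ∑ k' ∈ (Finset.Icc (1:ℤ) (N + p'.natDegree)).image (fun k => k - l),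
          polySeq p ((j - l) - k') * polySeq p' k' := by
    rw [Finset.sum_image]
    intro a _ b _ h; have h' : a - l = b - l := h; omega
  rw [hmap]
  apply polySeq_mul_core
  intro k hk
  simp only [Finset.mem_image, Finset.mem_Icc]
  refine ⟨k + l, ?_, by ring⟩
  constructor
  · by_contra h; push_neg at h
    exact hk (by rw [show polySeq p' k = 0 from if_neg (by omega)]; ring)
  · by_contra h; push_neg at h
    have : (p'.natDegree : ℤ) < k := by omega
    rcases lt_or_ge k 0 with h0 | h0
    · exact hk (by rw [show polySeq p' k = 0 from if_neg (by omega)]; ring)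
    · exact hk (by
        rw [show polySeq p' k = p'.coeff k.toNat from if_pos h0,
          Polynomial.coeff_eq_zero_of_natDegree_lt (by omega)]; ring)

lemma embed_supp (d : ℕ) (x : Fin d → ℝ) : SuppIn d (embed d x) := by
  intro j hj
  rw [embed, dif_neg (by omega)]

noncomputable def coeffAbsSum (p : ℝ[X]) : ℝ :=
  ∑ t ∈ Finset.range (p.natDegree + 1), |p.coeff t|

lemma abs_polySeq_le (p : ℝ[X]) (j : ℤ) : |polySeq p j| ≤ coeffAbsSum p := by
  have h0 : (0:ℝ) ≤ coeffAbsSum p := Finset.sum_nonneg fun t _ => abs_nonneg _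
  rcases lt_or_ge j 0 with h | h
  · rw [show polySeq p j = 0 from if_neg (by omega)]; simpa using h0
  · rw [show polySeq p j = p.coeff j.toNat from if_pos h]
    rcases le_or_gt j.toNat p.natDegree with hle | hlt
    · exact Finset.single_le_sum (f := fun t => |p.coeff t|) (fun t _ => abs_nonneg _)
        (Finset.mem_range.2 (by omega))
    · rw [Polynomial.coeff_eq_zero_of_natDegree_lt hlt]; simpa using h0

lemma conv_embed_bound {d : ℕ} {x : Fin d → ℝ} (hx : ∀ i, x i ∈ Set.Icc (0:ℝ) 1)
    (p : ℝ[X]) (j : ℤ) :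
    |convSeq (polySeq p) (embed d x) j| ≤ d * coeffAbsSum p := by
  rw [conv_eq_sum (embed_supp d x)]
  calc |∑ k ∈ Finset.Icc (1:ℤ) (d:ℤ), polySeq p (j - k) * embed d x k|
      ≤ ∑ k ∈ Finset.Icc (1:ℤ) (d:ℤ), |polySeq p (j - k) * embed d x k| :=
        Finset.abs_sum_le_sum_abs _ _
    _ ≤ ∑ _k ∈ Finset.Icc (1:ℤ) (d:ℤ), coeffAbsSum p := by
        apply Finset.sum_le_sum
        intro k hk
        simp only [Finset.mem_Icc] at hk
        rw [abs_mul]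
        have hb : |embed d x k| ≤ 1 := by
          rw [embed, dif_pos (by omega)]
          rcases hx ⟨(k-1).toNat, by omega⟩ with ⟨h1, h2⟩
          rw [abs_le]; constructor <;> linarith
        calc |polySeq p (j - k)| * |embed d x k| ≤ coeffAbsSum p * 1 := by
              apply mul_le_mul (abs_polySeq_le p _) hb (abs_nonneg _)
              exact le_trans (abs_nonneg _) (abs_polySeq_le p 0)
          _ = coeffAbsSum p := mul_one _
    _ = d * coeffAbsSum p := by
        rw [Finset.sum_const, Int.card_Icc, nsmul_eq_mul]
        congr 1
        rw [show ((d:ℤ) + 1 - 1) = (d:ℤ) by ring]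
        simp

lemma embed_nonneg {d : ℕ} {x : Fin d → ℝ} (hx : ∀ i, x i ∈ Set.Icc (0:ℝ) 1) (j : ℤ) :
    0 ≤ embed d x j := by
  rw [embed]
  split
  · exact (hx _).1
  · exact le_rfl

noncomputable def ccAux (s d : ℕ) (w : ℕ → ℤ → ℝ) (CB : ℕ → ℝ) : ℕ → ℤ → ℝ
  | 0 => fun _ => 0
  | k + 1 => fun j => convSeq (w k) (ccAux s d w CB k) j +
      onesV (d + (k + 1) * s) j *
        (CB k + ∑ j' ∈ Finset.Icc (1:ℤ) ((d + (k+1)*s : ℕ) : ℤ),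
          |convSeq (w k) (ccAux s d w CB k) j'|)

noncomputable def bAux (s d : ℕ) (w : ℕ → ℤ → ℝ) (CB : ℕ → ℝ) (k : ℕ) : ℝ :=
  CB k + ∑ j' ∈ Finset.Icc (1:ℤ) ((d + (k+1)*s : ℕ) : ℤ),
    |convSeq (w k) (ccAux s d w CB k) j'|

lemma ccAux_succ (s d : ℕ) (w : ℕ → ℤ → ℝ) (CB : ℕ → ℝ) (k : ℕ) (j : ℤ) :
    ccAux s d w CB (k+1) j
      = convSeq (w k) (ccAux s d w CB k) j + onesV (d + (k+1)*s) j * bAux s d w CB k := rfl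

lemma ccAux_supp (s d : ℕ) (w : ℕ → ℤ → ℝ) (CB : ℕ → ℝ) (hw : ∀ k, SuppOn s (w k)) :
    ∀ k, SuppIn ((d + k*s : ℕ) : ℤ) (ccAux s d w CB k) := by
  intro k
  induction k with
  | zero => intro j hj; rfl
  | succ k ih =>
    intro j hj
    rw [ccAux_succ]
    have h1 : convSeq (w k) (ccAux s d w CB k) j = 0 := by
      have := conv_supp (hw k) ih
      exact this j (by push_cast [add_mul] at hj ⊢; omega)
    have h2 : onesV (d + (k+1)*s) j = 0 := by
      rw [onesV, if_neg (by push_cast [add_mul] at hj ⊢; omega)]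
    rw [h1, h2]; ring

/-- natDegree of partial products -/
lemma prodDeg (s : ℕ) (q : ℕ → ℝ[X]) (hq : ∀ k, (q k).natDegree ≤ s) (k : ℕ) :
    (∏ i ∈ Finset.range k, q i).natDegree ≤ k * s := by
  calc (∏ i ∈ Finset.range k, q i).natDegree ≤ ∑ i ∈ Finset.range k, (q i).natDegree :=
        Polynomial.natDegree_prod_le _ _
    _ ≤ ∑ _i ∈ Finset.range k, s := Finset.sum_le_sum fun i _ => hq i
    _ = k * s := by simp [mul_comm]

lemma layers (s d : ℕ) (hd : 1 ≤ d) (q : ℕ → ℝ[X]) (hq : ∀ k, (q k).natDegree ≤ s)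
    (x : Fin d → ℝ) (hx : ∀ i, x i ∈ Set.Icc (0:ℝ) 1) :
    ∀ k j, eDCNNRelu s d (fun i => polySeq (q i))
        (bAux s d (fun i => polySeq (q i))
          (fun i => d * coeffAbsSum (∏ t ∈ Finset.range (i+1), q t)))
        (embed d x) k j
      = convSeq (polySeq (∏ t ∈ Finset.range k, q t)) (embed d x) j
        + ccAux s d (fun i => polySeq (q i))
            (fun i => d * coeffAbsSum (∏ t ∈ Finset.range (i+1), q t)) k j := by
  set w : ℕ → ℤ → ℝ := fun i => polySeq (q i) with hw
  set CB : ℕ → ℝ := fun i => d * coeffAbsSum (∏ t ∈ Finset.range (i+1), q t) with hCB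
  have hwsupp : ∀ k, SuppOn s (w k) := fun k => polySeq_suppOn (hq k)
  intro k
  induction k with
  | zero =>
    intro j
    show embed d x j = _
    rw [Finset.prod_range_zero, conv_one]
    show embed d x j = embed d x j + 0
    ring
  | succ k ih =>
    intro j
    have hccs : SuppIn ((d + k*s : ℕ) : ℤ) (ccAux s d w CB k) := ccAux_supp s d w CB hwsupp k
    have hconvk : SuppIn ((d + k*s : ℕ) : ℤ)
        (convSeq (polySeq (∏ t ∈ Finset.range k, q t)) (embed d x)) := by
      have := conv_supp (polySeq_suppOn (prodDeg s q hq k)) (embed_supp d x)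
      exact suppIn_mono (by push_cast; omega) this
    have hu : eDCNNRelu s d w (bAux s d w CB) (embed d x) k
        = fun j => convSeq (polySeq (∏ t ∈ Finset.range k, q t)) (embed d x) j
            + ccAux s d w CB k j := funext ih
    show max (convSeq (w k) (eDCNNRelu s d w (bAux s d w CB) (embed d x) k) j
        + onesV (d + (k+1)*s) j * bAux s d w CB k) 0 = _
    rw [hu]
    rw [conv_add hconvk hccs j]
    have hcc1 : convSeq (w k) (convSeq (polySeq (∏ t ∈ Finset.range k, q t)) (embed d x)) j
        = convSeq (polySeq (∏ t ∈ Finset.range (k+1), q t)) (embed d x) j := by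
      rw [hw]
      rw [conv_conv (embed_supp d x)]
      rw [Finset.prod_range_succ, mul_comm]
    rw [hcc1, ccAux_succ]
    set A := convSeq (polySeq (∏ t ∈ Finset.range (k+1), q t)) (embed d x) j with hA
    set B := convSeq (w k) (ccAux s d w CB k) j with hB
    rw [show A + B + onesV (d + (k+1)*s) j * bAux s d w CB k
        = A + (B + onesV (d + (k+1)*s) j * bAux s d w CB k) by ring]
    apply max_eq_left
    -- nonnegativity
    by_cases hj : 1 ≤ j ∧ j ≤ ((d + (k+1)*s : ℕ) : ℤ)
    · have hone : onesV (d + (k+1)*s) j = 1 := if_pos hj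
      rw [hone, one_mul, bAux]
      have hAbound : -(d * coeffAbsSum (∏ t ∈ Finset.range (k+1), q t)) ≤ A :=
        neg_le_of_abs_le (conv_embed_bound hx _ j)
      have hBbound : -B ≤ ∑ j' ∈ Finset.Icc (1:ℤ) ((d + (k+1)*s : ℕ) : ℤ),
          |convSeq (w k) (ccAux s d w CB k) j'| := by
        calc -B ≤ |B| := neg_le_abs B
          _ ≤ _ := Finset.single_le_sum (f := fun j' => |convSeq (w k) (ccAux s d w CB k) j'|)
              (fun t _ => abs_nonneg _) (Finset.mem_Icc.2 hj)
      have : CB k = d * coeffAbsSum (∏ t ∈ Finset.range (k+1), q t) := rfl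
      rw [this]
      linarith
    · have hone : onesV (d + (k+1)*s) j = 0 := if_neg hj
      have hA0 : A = 0 := by
        have hsupp : SuppIn ((d + (k+1)*s : ℕ) : ℤ)
            (convSeq (polySeq (∏ t ∈ Finset.range (k+1), q t)) (embed d x)) := by
          have := conv_supp (polySeq_suppOn (prodDeg s q hq (k+1))) (embed_supp d x)
          exact suppIn_mono (by push_cast; omega) this
        exact hsupp j (by omega)
      have hB0 : B = 0 := by
        have := conv_supp (hwsupp k) hccs
        exact this j (by push_cast [add_mul] at hj ⊢; omega)
      rw [hone, hA0, hB0]; simp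

/-- extract a factor of natDegree in [t, t+1] from a real polynomial -/
lemma extract_factor : ∀ (t : ℕ) (P : ℝ[X]), P ≠ 0 → t ≤ P.natDegree →
    ∃ u r : ℝ[X], P = u * r ∧ t ≤ u.natDegree ∧ u.natDegree ≤ t + 1 := by
  intro t
  induction t with
  | zero => intro P hP _; exact ⟨1, P, by ring, by simp, by simp⟩
  | succ t ih =>
    intro P hP ht
    obtain ⟨u, r, hur, h1, h2⟩ := ih P hP (by omega)
    rcases Nat.lt_or_ge u.natDegree (t+1) with hlt | hge
    · -- u.natDegree = t, extract an irreducible factor from r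
      have hu0 : u ≠ 0 := fun h => hP (by simp [hur, h])
      have hr0 : r ≠ 0 := fun h => hP (by simp [hur, h])
      have hdeg : P.natDegree = u.natDegree + r.natDegree := by
        rw [hur, Polynomial.natDegree_mul hu0 hr0]
      have hrpos : 1 ≤ r.natDegree := by omega
      have hrnu : ¬IsUnit r := by
        intro hunit
        have := Polynomial.natDegree_eq_zero_of_isUnit hunit
        omega
      obtain ⟨m, hm, hdvd⟩ := WfDvdMonoid.exists_irreducible_factor hrnu hr0
      obtain ⟨r', hr'⟩ := hdvd
      have hm0 : m ≠ 0 := hm.ne_zero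
      have hr'0 : r' ≠ 0 := fun h => hr0 (by simp [hr', h])
      have hm1 : 1 ≤ m.natDegree := by
        rcases Nat.eq_zero_or_pos m.natDegree with h0 | h
        · exfalso
          obtain ⟨c, rfl⟩ := Polynomial.natDegree_eq_zero.1 h0
          exact hm.not_isUnit (isUnit_C.2 (IsUnit.mk0 c (fun hc => hm0 (by simp [hc]))))
        · omega
      have hm2 : m.natDegree ≤ 2 := hm.natDegree_le_two
      refine ⟨u * m, r', by rw [hur, hr']; ring, ?_, ?_⟩ <;>
        rw [Polynomial.natDegree_mul hu0 hm0] <;> omega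
    · exact ⟨u, r, hur, by omega, by omega⟩

/-- pack into K+1 factors of degree ≤ s each -/
lemma pack_factors (s : ℕ) (hs : 2 ≤ s) : ∀ (K : ℕ) (P : ℝ[X]),
    P.natDegree ≤ K * (s - 1) + s →
    ∃ q : ℕ → ℝ[X], (∀ k, (q k).natDegree ≤ s) ∧ ∏ i ∈ Finset.range (K+1), q i = P := by
  intro K
  induction K with
  | zero =>
    intro P hP
    refine ⟨fun k => if k = 0 then P else 1, fun k => ?_, by simp⟩
    by_cases h : k = 0 <;> simp [h] <;> omega
  | succ K ih =>
    intro P hP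
    rcases le_or_gt P.natDegree (K * (s - 1) + s) with hle | hgt
    · obtain ⟨q, hq, hprod⟩ := ih P hle
      refine ⟨fun k => Nat.casesOn k 1 q, fun k => by cases k <;> simp [hq], ?_⟩
      rw [Finset.prod_range_succ']
      simpa using hprod
    · have hP0 : P ≠ 0 := fun h => by simp [h] at hgt
      obtain ⟨u, r, hur, h1, h2⟩ := extract_factor (s - 1) P hP0 (by omega)
      have hu0 : u ≠ 0 := fun h => hP0 (by simp [hur, h])
      have hr0 : r ≠ 0 := fun h => hP0 (by simp [hur, h])
      have hdeg : P.natDegree = u.natDegree + r.natDegree := by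
        rw [hur, Polynomial.natDegree_mul hu0 hr0]
      have hexp : (K+1) * (s - 1) = K * (s-1) + (s-1) := by ring
      obtain ⟨q, hq, hprod⟩ := ih r (by omega)
      refine ⟨fun k => Nat.casesOn k u q, fun k => by cases k <;> simp [hq]; omega, ?_⟩
      rw [Finset.prod_range_succ']
      simp only []
      rw [show (∏ i ∈ Finset.range (K+1), (fun k => Nat.casesOn k u q) (i+1)) = r from hprod]
      rw [hur]; rw [show (Nat.rec u (fun n _ => q n) 0 : ℝ[X]) = u from rfl]; ring

/-- Shallow net representation by eDCNN (Theorem 1 of the paper): for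
`2 ≤ s ≤ d`, `W ∈ ℝ^{n×d}`, `θ ∈ ℝ^n` and `L* = ⌈nd/(s-1)⌉`, there exist
constant biases `b¹,…,b^{L*-1}`, a final bias vector `b^{L*}` and filters
`w¹,…,w^{L*}` supported on `{0,…,s}` such that for every `x ∈ [0,1]^d`,
`σ(Wx+θ) = S_{d+L*s,d,0} ∘ σ ∘ C_{L*} ∘ σ ∘ C^R_{L*-1} ∘ ⋯ ∘ σ ∘ C^R_1(x)`,
componentwise (the `i`-th output is the pooled coordinate `i·d`). -/
theorem shallow_net_representation (s d n : ℕ) (hs : 2 ≤ s) (hsd : s ≤ d)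
    (hn : 1 ≤ n) (W : Matrix (Fin n) (Fin d) ℝ) (θ : Fin n → ℝ) :
    ∃ (ws : ℕ → ℤ → ℝ) (b : ℕ → ℝ) (bL : ℤ → ℝ),
      (∀ k, SuppOn s (ws k)) ∧
      ∀ x : Fin d → ℝ, (∀ i, x i ∈ Set.Icc (0 : ℝ) 1) →
        ∀ i : Fin n,
          max (W.mulVec x i + θ i) 0 =
            max (convSeq (ws ((n * d + s - 2) / (s - 1) - 1))
                  (eDCNNRelu s d ws b (embed d x) ((n * d + s - 2) / (s - 1) - 1))
                  ((((i : ℕ) + 1) * d : ℕ)) +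
                bL ((((i : ℕ) + 1) * d : ℕ))) 0 := by
  have hd0 : 0 < d := by omega
  have hn0 : 0 < n := hn
  set L : ℕ := (n * d + s - 2) / (s - 1) with hLdef
  have hnd1 : 1 ≤ n * d := Nat.one_le_iff_ne_zero.2 (by positivity)
  have hL : n * d ≤ L * (s - 1) := by
    have h1 := Nat.div_add_mod (n * d + s - 2) (s - 1)
    have h2 := Nat.mod_lt (n * d + s - 2) (show 0 < s - 1 by omega)
    have h3 : (n * d + s - 2) / (s - 1) * (s - 1) = (s - 1) * ((n * d + s - 2) / (s - 1)) :=
      Nat.mul_comm _ _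
    rw [hLdef]
    omega
  have hL1 : 1 ≤ L := by
    by_contra h
    push_neg at h
    interval_cases L
    omega
  set Lm1 : ℕ := L - 1 with hLm1
  have hLsucc : Lm1 + 1 = L := by omega
  -- the target sequence of coefficients
  set a : ℕ → ℝ := fun j => if j < n * d then
      W ⟨j / d % n, Nat.mod_lt _ hn0⟩ ⟨(d - 1 - j % d) % d, Nat.mod_lt _ hd0⟩ else 0 with ha
  set P : ℝ[X] := ∑ j ∈ Finset.range (n * d), Polynomial.C (a j) * Polynomial.X ^ j with hP
  have hPcoeff : ∀ m : ℕ, P.coeff m = if m < n * d then a m else 0 := by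
    intro m
    rw [hP, Polynomial.finset_sum_coeff]
    have : ∀ j ∈ Finset.range (n * d),
        (Polynomial.C (a j) * Polynomial.X ^ j).coeff m
          = if m = j then a j else 0 := by
      intro j _
      rw [Polynomial.coeff_C_mul, Polynomial.coeff_X_pow]
      simp [mul_ite]
    rw [Finset.sum_congr rfl this, Finset.sum_ite_eq]
    simp
  have hPdeg : P.natDegree ≤ Lm1 * (s - 1) + s := by
    have h1 : P.natDegree ≤ n * d - 1 := by
      apply Polynomial.natDegree_sum_le_of_forall_le
      intro j hj
      simp only [Finset.mem_range] at hj
      exact (Polynomial.natDegree_C_mul_X_pow_le _ _).trans (by omega)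
    have hLs : L * (s - 1) = Lm1 * (s - 1) + (s - 1) := by
      rw [← hLsucc]; ring
    omega
  obtain ⟨q, hq, hprod⟩ := pack_factors s hs Lm1 P hPdeg
  set ws : ℕ → ℤ → ℝ := fun k => polySeq (q k) with hws
  set CB : ℕ → ℝ := fun i => d * coeffAbsSum (∏ t ∈ Finset.range (i+1), q t) with hCB
  set b : ℕ → ℝ := bAux s d ws CB with hb
  set cc := ccAux s d ws CB with hcc
  have hwssupp : ∀ k, SuppOn s (ws k) := fun k => polySeq_suppOn (hq k)
  refine ⟨ws, b, fun j =>
      (if 1 ≤ j ∧ j ≤ (n * d : ℤ) ∧ ((d:ℤ) ∣ j) then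
        θ ⟨(j / d - 1).toNat % n, Nat.mod_lt _ hn0⟩ else 0)
      - convSeq (ws Lm1) (cc Lm1) j, hwssupp, ?_⟩
  intro x hx i
  set m : ℤ := ((((i : ℕ) + 1) * d : ℕ) : ℤ) with hm
  -- rewrite the network output
  have hu : eDCNNRelu s d ws b (embed d x) Lm1
      = fun j => convSeq (polySeq (∏ t ∈ Finset.range Lm1, q t)) (embed d x) j
          + cc Lm1 j := funext (layers s d (by omega) q hq x hx Lm1)
  have hccs : SuppIn ((d + Lm1*s : ℕ) : ℤ) (cc Lm1) := ccAux_supp s d ws CB hwssupp Lm1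
  have hconvk : SuppIn ((d + Lm1*s : ℕ) : ℤ)
      (convSeq (polySeq (∏ t ∈ Finset.range Lm1, q t)) (embed d x)) := by
    have := conv_supp (polySeq_suppOn (prodDeg s q hq Lm1)) (embed_supp d x)
    exact suppIn_mono (by push_cast; omega) this
  have hsplit : convSeq (ws Lm1) (eDCNNRelu s d ws b (embed d x) Lm1) m
      = convSeq (polySeq P) (embed d x) m + convSeq (ws Lm1) (cc Lm1) m := by
    rw [hu, conv_add hconvk hccs m]
    congr 1
    rw [hws]
    rw [conv_conv (embed_supp d x)]
    rw [show q Lm1 * ∏ t ∈ Finset.range Lm1, q t = P by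
      rw [← hprod, Finset.prod_range_succ]; ring]
  -- the bias at position m
  have hbL : (if 1 ≤ m ∧ m ≤ (n * d : ℤ) ∧ ((d:ℤ) ∣ m) then
        θ ⟨(m / d - 1).toNat % n, Nat.mod_lt _ hn0⟩ else 0) = θ i := by
    have hcond : 1 ≤ m ∧ m ≤ (n * d : ℤ) ∧ ((d:ℤ) ∣ m) := by
      refine ⟨?_, ?_, ⟨((i:ℕ)+1 : ℕ), ?_⟩⟩
      · rw [hm]
        have h1 : 1 ≤ ((i:ℕ)+1)*d := Nat.one_le_iff_ne_zero.2 (by positivity)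
        exact_mod_cast h1
      · rw [hm]; push_cast
        have : (i:ℕ) + 1 ≤ n := i.2
        calc (((i:ℕ):ℤ) + 1) * d ≤ (n:ℤ) * d := by
              apply mul_le_mul_of_nonneg_right _ (by positivity)
              exact_mod_cast this
          _ = _ := by ring
      · rw [hm]; push_cast; ring
    rw [if_pos hcond]
    congr 1
    apply Fin.ext
    show ((m / d - 1).toNat % n) = (i : ℕ)
    have hdiv : m / (d:ℤ) = (i:ℕ) + 1 := by
      rw [hm]; push_cast
      rw [Int.mul_ediv_cancel _ (by exact_mod_cast hd0.ne')]
    rw [hdiv]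
    have : (((i:ℕ):ℤ) + 1 - 1).toNat = (i:ℕ) := by omega
    rw [this, Nat.mod_eq_of_lt i.2]
  -- the main coefficient computation
  have hconvP : convSeq (polySeq P) (embed d x) m = W.mulVec x i := by
    rw [conv_eq_sum (embed_supp d x)]
    rw [show W.mulVec x i = ∑ t : Fin d, W i t * x t by
      simp [Matrix.mulVec, dotProduct]]
    apply Finset.sum_nbij' (fun (k : ℤ) => (⟨(k-1).toNat % d, Nat.mod_lt _ hd0⟩ : Fin d))
      (fun (t : Fin d) => ((t : ℕ) : ℤ) + 1)
    · intro k _; exact Finset.mem_univ _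
    · intro t _
      simp only [Finset.mem_Icc]
      have := t.2
      omega
    · intro k hk
      simp only [Finset.mem_Icc] at hk
      have h1 : (k-1).toNat % d = (k-1).toNat := Nat.mod_eq_of_lt (by omega)
      simp only [h1]
      omega
    · intro t _
      apply Fin.ext
      show ((((t:ℕ):ℤ) + 1 - 1).toNat % d) = (t : ℕ)
      have : (((t:ℕ):ℤ) + 1 - 1).toNat = (t:ℕ) := by omega
      rw [this, Nat.mod_eq_of_lt t.2]
    · intro k hk
      simp only [Finset.mem_Icc] at hk
      have htd : (k-1).toNat < d := by omega
      have h1 : (k-1).toNat % d = (k-1).toNat := Nat.mod_eq_of_lt htd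
      obtain ⟨t, ht⟩ : ∃ t : ℕ, (k-1).toNat = t := ⟨_, rfl⟩
      rw [ht] at htd h1
      have hknat : k = (t : ℤ) + 1 := by omega
      have hfin : (i:ℕ) + 1 ≤ n := i.2
      have hexp : ((i:ℕ)+1)*d = (i:ℕ)*d + d := by ring
      have hup : t + 1 ≤ ((i:ℕ)+1)*d := by
        have : 1*d ≤ ((i:ℕ)+1)*d := Nat.mul_le_mul_right d (by omega)
        omega
      have hmk' : m - k = ((((i:ℕ)+1)*d - (t+1) : ℕ) : ℤ) := by
        rw [hm, hknat, Nat.cast_sub hup]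
        push_cast
        ring
      have hmknat : (m - k).toNat = ((i:ℕ)+1)*d - (t+1) := by
        rw [hmk', Int.toNat_natCast]
      have hlt : (m - k).toNat < n * d := by
        rw [hmknat]
        have h2 : ((i:ℕ)+1)*d ≤ n*d := Nat.mul_le_mul_right d hfin
        omega
      have hmk0 : (0:ℤ) ≤ m - k := by rw [hmk']; positivity
      have hjval : ((i:ℕ)+1)*d - (t+1) = (i:ℕ)*d + (d-1-t) := by
        rw [hexp]; omega
      -- embed value
      have hembed : embed d x k = x ⟨(k-1).toNat % d, Nat.mod_lt _ hd0⟩ := by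
        rw [embed, dif_pos (by omega)]
        congr 1
        apply Fin.ext
        show (k - 1).toNat = (k-1).toNat % d
        rw [ht, h1]
      have hpoly : polySeq P (m - k) = a ((m - k).toNat) := by
        rw [polySeq, if_pos hmk0, hPcoeff, if_pos hlt]
      rw [hpoly, hembed]
      congr 1
      rw [hmknat, hjval, ha]
      simp only []
      rw [if_pos (by rw [← hjval]; omega)]
      have hdiv2 : ((i:ℕ) * d + (d - 1 - t)) / d = (i:ℕ) := by
        rw [add_comm, Nat.add_mul_div_right _ _ hd0, Nat.div_eq_of_lt (by omega)]; omega
      have hmod2 : ((i:ℕ) * d + (d - 1 - t)) % d = d - 1 - t := by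
        rw [add_comm, Nat.add_mul_mod_self_right, Nat.mod_eq_of_lt (by omega)]
      congr 1
      · apply Fin.ext
        show ((i:ℕ) * d + (d - 1 - t)) / d % n = (i:ℕ)
        rw [hdiv2, Nat.mod_eq_of_lt i.2]
      · apply Fin.ext
        show (d - 1 - ((i:ℕ) * d + (d - 1 - t)) % d) % d = (k-1).toNat % d
        rw [hmod2, ht, h1]
        have : d - 1 - (d - 1 - t) = t := by omega
        rw [this, Nat.mod_eq_of_lt htd]
  -- assemble
  rw [hsplit]
  rw [show convSeq (polySeq P) (embed d x) m + convSeq (ws Lm1) (cc Lm1) m +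
      ((if 1 ≤ m ∧ m ≤ (n * d : ℤ) ∧ ((d:ℤ) ∣ m) then
        θ ⟨(m / d - 1).toNat % n, Nat.mod_lt _ hn0⟩ else 0)
      - convSeq (ws Lm1) (cc Lm1) m)
      = convSeq (polySeq P) (embed d x) m +
        (if 1 ≤ m ∧ m ≤ (n * d : ℤ) ∧ ((d:ℤ) ∣ m) then
        θ ⟨(m / d - 1).toNat % n, Nat.mod_lt _ hn0⟩ else 0) by ring]
  rw [hbL, hconvP]
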